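/- arXiv:1608.04191 — 2 statements merged into one kernel-verified Lean document; each statement's English description precedes it below -/
import Mathlib

section
/- Let A be an abelian category and let F, G, E be (cochain) complexes in A. Suppose f : F ⟶ G and g : E ⟶ G are quasi-isomorphisms of complexes. Then there exists a complex H in A together with quasi-isomorphisms α : H ⟶ F and β : H ⟶ E such that the two composites f ∘ α and g ∘ β are homotopic (i.e. the square commutes up to chain homotopy). One may take H to be the shift by −1 of the mapping cone of the morphism E ⟶ cone(f) sending x to (0, g(x)). -/
open CategoryTheory CochainComplex HomComplex

open CategoryTheory.Pretriangulated in

/-- If `f : F ⟶ G` and `g : E ⟶ G` are quasi-isomorphisms of cochain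
complexes in an abelian category, then there are quasi-isomorphisms `α : H ⟶ F` and
`β : H ⟶ E` with `α ≫ f` homotopic to `β ≫ g`, where one may take
`H := (mappingCone (g ≫ mappingCone.inr f))⟦(-1 : ℤ)⟧`. -/
theorem stmt0 {A : Type*} [Category A] [Abelian A]
    {E F G : CochainComplex A ℤ} (f : F ⟶ G) (g : E ⟶ G)
    [QuasiIso f] [QuasiIso g] :
    ∃ (H : CochainComplex A ℤ) (α : H ⟶ F) (β : H ⟶ E),
      QuasiIso α ∧ QuasiIso β ∧ Nonempty (Homotopy (α ≫ f) (β ≫ g)) ∧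
      Nonempty (H ≅ (mappingCone (g ≫ mappingCone.inr f))⟦(-1 : ℤ)⟧) := by
  let ψ : E ⟶ mappingCone f := g ≫ mappingCone.inr f
  let Q := HomotopyCategory.quotient A (ComplexShape.up ℤ)
  let T := mappingCone.triangleh ψ
  have hT : T ∈ distTriang (HomotopyCategory A (ComplexShape.up ℤ)) :=
    HomotopyCategory.mappingCone_triangleh_distinguished ψ
  have hT' : T.invRotate ∈ distTriang (HomotopyCategory A (ComplexShape.up ℤ)) :=
    inv_rot_of_distTriang _ hT
  let e : Q.obj ((mappingCone ψ)⟦(-1 : ℤ)⟧) ≅ (Q.obj (mappingCone ψ))⟦(-1 : ℤ)⟧ :=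
    (Q.commShiftIso (-1 : ℤ)).app (mappingCone ψ)
  let b : (Q.obj (mappingCone ψ))⟦(-1 : ℤ)⟧ ⟶ Q.obj E := T.invRotate.mor₁
  -- `f` quasi-iso implies `Q.obj (mappingCone f)` is acyclic
  have hWf : (HomotopyCategory.subcategoryAcyclic A).trW (Q.map f) := by
    rw [← HomotopyCategory.quasiIso_eq_trW_subcategoryAcyclic,
      HomotopyCategory.quotient_map_mem_quasiIso_iff,
      HomologicalComplex.mem_quasiIso_iff]
    infer_instance
  have hP : (HomotopyCategory.subcategoryAcyclic A) (Q.obj (mappingCone f)) :=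
    (ObjectProperty.trW_iff_of_distinguished _ _
      (HomotopyCategory.mappingCone_triangleh_distinguished f)).1 hWf
  have hWb : (HomotopyCategory.subcategoryAcyclic A).trW b :=
    ObjectProperty.trW.mk _ hT' hP
  -- the composition `b ≫ Q.map ψ` vanishes
  have hb0 : b ≫ T.mor₁ = 0 := comp_distTriang_mor_zero₁₂ _ hT'
  have hTmor₁ : Q.map g ≫ Q.map (mappingCone.inr f) = T.mor₁ := by
    rw [← Q.map_comp]; rfl
  have hbg : (e.hom ≫ b ≫ Q.map g) ≫ (mappingCone.triangleh f).mor₂ = 0 := by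
    have : (mappingCone.triangleh f).mor₂ = Q.map (mappingCone.inr f) := rfl
    show (e.hom ≫ b ≫ Q.map g) ≫ Q.map (mappingCone.inr f) = 0
    rw [Category.assoc, Category.assoc, hTmor₁]
    erw [hb0]
    exact Limits.comp_zero
  obtain ⟨a, ha⟩ := Triangle.coyoneda_exact₂ _
    (HomotopyCategory.mappingCone_triangleh_distinguished f) (e.hom ≫ b ≫ Q.map g) hbg
  obtain ⟨α, hα⟩ : ∃ α : _ ⟶ F, Q.map α = a := Q.map_surjective a
  obtain ⟨β, hβ⟩ := Q.map_surjective (e.hom ≫ b)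
  have heq : Q.map (α ≫ f) = Q.map (β ≫ g) := by
    rw [Q.map_comp, Q.map_comp, hα, hβ, Category.assoc]
    exact ha.symm
  have h : Homotopy (α ≫ f) (β ≫ g) := HomotopyCategory.homotopyOfEq _ _ heq
  -- β is a quasi-isomorphism
  have hβW : HomologicalComplex.quasiIso A (ComplexShape.up ℤ) β := by
    rw [← HomotopyCategory.quotient_map_mem_quasiIso_iff,
      HomotopyCategory.quasiIso_eq_trW_subcategoryAcyclic]
    show (HomotopyCategory.subcategoryAcyclic A).trW (Q.map β)
    rw [hβ]
    exact (MorphismProperty.cancel_left_of_respectsIso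
      (HomotopyCategory.subcategoryAcyclic A).trW e.hom b).2 hWb
  have hβq : QuasiIso β := by
    rwa [HomologicalComplex.mem_quasiIso_iff] at hβW
  -- α is a quasi-isomorphism
  have hαf : QuasiIso (α ≫ f) := by
    rw [quasiIso_iff]
    intro i
    rw [quasiIsoAt_iff_isIso_homologyMap, h.homologyMap_eq,
      ← quasiIsoAt_iff_isIso_homologyMap]
    infer_instance
  have hαq : QuasiIso α := quasiIso_of_comp_right α f
  exact ⟨(mappingCone ψ)⟦(-1 : ℤ)⟧, α, β, hαq, hβq, ⟨h⟩, ⟨Iso.refl _⟩⟩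
end

section
/- (Lagrange inversion) Let A be a commutative ℚ-algebra, let g ∈ A[[u]] be a formal power series with constant coefficient g(0) = 1, and let h ∈ A[[u]] be the unique power series with zero constant term satisfying h(u·g(u)) = u (the compositional inverse of u·g(u)). Then for every natural number r, the coefficient of u^r in g(u)^{−(r+1)} equals (r+1) times the coefficient of u^{r+1} in h(u). -/
/-- Substitution of the family `a` of (multivariate) formal power series into the
multivariate formal power series `F`, defined coefficientwise via truncation.
When every `a i` has zero constant coefficient this computes the usual composition
(substitution) of formal power series; in particular, for `τ = σ = Unit` it is the
composition `F ∘ a` of one-variable formal power series. -/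
noncomputable def msubst {τ σ A : Type*} [Fintype τ] [CommRing A]
    (a : τ → MvPowerSeries σ A) (F : MvPowerSeries τ A) : MvPowerSeries σ A :=
  fun d => letI := Classical.decEq τ; MvPowerSeries.coeff d
    (MvPolynomial.eval₂ ((MvPowerSeries.C (σ := σ) (R := A))) a
      (MvPowerSeries.trunc A
        (Finsupp.equivFunOnFinite.symm fun _ => (d.sum fun _ n => n) + 1) F))

namespace LagrangeAux

open PowerSeries

variable {A : Type*} [CommRing A]

lemma unit_single (d : Unit →₀ ℕ) : d = Finsupp.single () (d ()) := by
  ext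
  simp

lemma unit_lt {m e : Unit →₀ ℕ} : m < e ↔ m () < e () := by
  constructor
  · intro hlt
    rcases lt_or_eq_of_le (hlt.le ()) with h' | h'
    · exact h'
    · exact absurd (Finsupp.ext fun i => by exact h') hlt.ne
  · intro hlt
    refine lt_iff_le_and_ne.mpr ⟨fun i => ?_, fun hc => ?_⟩
    · exact hlt.le
    · rw [hc] at hlt; exact lt_irrefl _ hlt

lemma coeff_unit (d : Unit →₀ ℕ) (F : PowerSeries A) :
    MvPowerSeries.coeff d F = PowerSeries.coeff (d ()) F := by
  rw [PowerSeries.coeff_def (s := d) rfl]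

lemma trunc_unit_eq [hU : DecidableEq Unit] (F : PowerSeries A) (N : ℕ) :
    MvPowerSeries.trunc A (Finsupp.equivFunOnFinite.symm fun _ => N + 1) F =
      ∑ n ∈ Finset.range (N + 1),
        MvPolynomial.monomial (Finsupp.single () n) (PowerSeries.coeff n F) := by
  apply MvPolynomial.ext
  intro d
  rw [MvPowerSeries.coeff_trunc]
  rw [MvPolynomial.coeff_sum]
  simp only [MvPolynomial.coeff_monomial]
  have hcond : ∀ x : ℕ, ((Finsupp.single () x = d) ↔ (x = d ())) := by
    intro x
    constructor
    · intro hx; rw [← hx]; simp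
    · intro hx; rw [hx, ← unit_single]
  simp only [hcond]
  rw [Finset.sum_ite_eq' (Finset.range (N + 1))]
  have he : (Finsupp.equivFunOnFinite.symm fun _ : Unit => N + 1) () = N + 1 := rfl
  simp only [unit_lt, he, Finset.mem_range, coeff_unit]

lemma coeff_msubst (p F : PowerSeries A) (N : ℕ) :
    PowerSeries.coeff N (msubst (fun _ : Unit => p) F) =
      PowerSeries.coeff N
        (∑ n ∈ Finset.range (N + 1), PowerSeries.C (PowerSeries.coeff n F) * p ^ n) := by
  rw [PowerSeries.coeff_def (s := Finsupp.single () N) (by simp)]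
  rw [MvPowerSeries.coeff_apply, msubst, MvPowerSeries.coeff_apply]
  have hsum : (((Finsupp.single () N) : Unit →₀ ℕ).sum fun _ n => n) = N := by simp
  rw [hsum, trunc_unit_eq (hU := Classical.decEq Unit), MvPolynomial.eval₂_sum]
  have hterm : ∀ n : ℕ,
      MvPolynomial.eval₂ (MvPowerSeries.C (σ := Unit) (R := A)) (fun _ : Unit => p)
        (MvPolynomial.monomial (Finsupp.single () n) (PowerSeries.coeff n F)) =
      PowerSeries.C (PowerSeries.coeff n F) * p ^ n := by
    intro n
    rw [MvPolynomial.eval₂_monomial, Finsupp.prod_single_index (by exact pow_zero p)]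
    rfl
  rw [show ((MvPowerSeries.coeff (Finsupp.single () N)) :
        MvPowerSeries Unit A → A) = fun q => MvPowerSeries.coeff (Finsupp.single () N) q
      from rfl]
  simp only [hterm]
  exact Eq.symm (MvPowerSeries.coeff_apply _ _)

variable [Algebra ℚ A]

lemma nat_isUnit (n : ℕ) : IsUnit ((n + 1 : ℕ) : A) := by
  have hcast : ((n + 1 : ℕ) : A) = algebraMap ℚ A ((n + 1 : ℕ) : ℚ) := by
    rw [map_natCast]
  rw [hcast]
  exact (isUnit_iff_ne_zero.mpr (Nat.cast_ne_zero.mpr (Nat.succ_ne_zero n))).map _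

lemma coeff_pow_succ (G : PowerSeries A) (b : ℕ) :
    coeff (b + 1) (G ^ (b + 1)) = coeff b (G ^ b * d⁄dX A G) := by
  have h := Derivation.leibniz_pow (d⁄dX A) (a := G) (b + 1)
  have h2 : coeff b (d⁄dX A (G ^ (b + 1))) = coeff (b + 1) (G ^ (b + 1)) * (b + 1) :=
    coeff_derivative _ _
  rw [h] at h2
  simp only [Nat.add_sub_cancel, smul_eq_mul] at h2
  rw [map_nsmul, nsmul_eq_mul] at h2
  refine (nat_isUnit b).mul_left_cancel ?_
  rw [h2]
  push_cast
  ring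

lemma key_vanish (g G : PowerSeries A) (hG : g * G = 1) (a b : ℕ) :
    coeff (a + b + 1) ((X * g) ^ a * (d⁄dX A (X * g)) * G ^ (a + b + 2)) = 0 := by
  have hone : d⁄dX A (g * G) = 0 := by rw [hG]; simp
  rw [Derivation.leibniz] at hone
  simp only [smul_eq_mul] at hone
  have h3 : d⁄dX A (X * g) = g + X * d⁄dX A g := by
    rw [Derivation.leibniz, derivative_X]
    simp only [smul_eq_mul]
    ring
  have h4 : (d⁄dX A g) * G ^ 2 = -(d⁄dX A G) := by
    linear_combination G * hone - (d⁄dX A G) * hG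
  have h1 : (g * G) ^ (a + 1) = 1 := by rw [hG, one_pow]
  have h2 : (g * G) ^ a = 1 := by rw [hG, one_pow]
  have KI : X ^ (b + 1) * ((X * g) ^ a * (d⁄dX A (X * g)) * G ^ (a + b + 2)) =
      X ^ (a + b + 1) * G ^ (b + 1) - X ^ (a + b + 2) * (G ^ b * d⁄dX A G) := by
    rw [h3]
    linear_combination (X ^ (a + b + 1) * G ^ (b + 1)) * h1 +
      (X ^ (a + b + 2) * G ^ (b + 2) * (d⁄dX A g)) * h2 +
      (X ^ (a + b + 2) * G ^ b) * h4
  have e0 := congrArg (coeff ((a + b + 1) + (b + 1))) KI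
  rw [coeff_X_pow_mul, map_sub] at e0
  rw [show (a + b + 1) + (b + 1) = (b + 1) + (a + b + 1) by ring, coeff_X_pow_mul] at e0
  rw [show (b + 1) + (a + b + 1) = b + (a + b + 2) by ring, coeff_X_pow_mul] at e0
  rw [e0, coeff_pow_succ, sub_self]

end LagrangeAux

open PowerSeries LagrangeAux in
/-- **Lagrange inversion.** Let `A` be a commutative `ℚ`-algebra,
`g ∈ A⟦u⟧` with `g(0) = 1`, and let `h` be the power series with zero constant term
such that `h(u·g(u)) = u`. If `G` is the multiplicative inverse of `g`, then for every
`r : ℕ`, the coefficient of `u^r` in `G^(r+1) = g^{-(r+1)}` equals `(r+1)` times the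
coefficient of `u^(r+1)` in `h`. -/
theorem stmt4 {A : Type*} [CommRing A] [Algebra ℚ A]
    (g h G : PowerSeries A)
    (hg : PowerSeries.constantCoeff g = 1)
    (hG : g * G = 1)
    (hh : PowerSeries.constantCoeff h = 0)
    (hcomp : msubst (fun _ : Unit => PowerSeries.X * g) h = PowerSeries.X)
    (r : ℕ) :
    PowerSeries.coeff r (G ^ (r + 1)) =
      ((r : A) + 1) * PowerSeries.coeff (r + 1) h := by
  have step1 : ∀ N : ℕ, coeff N
      (∑ n ∈ Finset.range (N + 1), C (coeff n h) * (X * g) ^ n) = coeff N X := by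
    intro N
    rw [← coeff_msubst, hcomp]
  set S := ∑ n ∈ Finset.range (r + 2), C (coeff n h) * (X * g) ^ n with hS
  have hvanish : ∀ N n : ℕ, N < n → coeff N (C (coeff n h) * (X * g) ^ n) = 0 := by
    intro N n hn
    have e : C (coeff n h) * (X * g) ^ n = X ^ n * (C (coeff n h) * g ^ n) := by ring
    rw [e, coeff_X_pow_mul', if_neg (by omega)]
  have step2 : ∀ N : ℕ, N ≤ r + 1 → coeff N S = coeff N X := by
    intro N hN
    rw [← step1 N, hS, map_sum, map_sum]
    exact (Finset.sum_subset (Finset.range_subset_range.mpr (by omega))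
      (fun n hn hn' => hvanish N n (by simp only [Finset.mem_range] at hn'; omega))).symm
  have step3 : (X : A⟦X⟧) ^ (r + 2) ∣ S - X := by
    rw [X_pow_dvd_iff]
    intro m hm
    rw [map_sub, step2 m (by omega), sub_self]
  obtain ⟨q, hq⟩ := step3
  have step4 : ∀ m, m < r + 1 → coeff m (d⁄dX A S - 1) = 0 := by
    intro m hm
    have e : d⁄dX A S - 1 = d⁄dX A (S - X) := by rw [map_sub, derivative_X]
    rw [e, hq, coeff_derivative, coeff_X_pow_mul', if_neg (by omega), zero_mul]
  have step5 : coeff r (d⁄dX A S * G ^ (r + 1)) = coeff r (G ^ (r + 1)) := by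
    obtain ⟨w, hw⟩ := X_pow_dvd_iff.mpr step4
    have e : d⁄dX A S * G ^ (r + 1) - G ^ (r + 1) = X ^ (r + 1) * (w * G ^ (r + 1)) := by
      linear_combination G ^ (r + 1) * hw
    have h0 : coeff r (d⁄dX A S * G ^ (r + 1) - G ^ (r + 1)) = 0 := by
      rw [e, coeff_X_pow_mul', if_neg (by omega)]
    rw [map_sub] at h0
    exact sub_eq_zero.mp h0
  have hDS : d⁄dX A S = ∑ n ∈ Finset.range (r + 2), (coeff n h) • d⁄dX A ((X * g) ^ n) := by
    rw [hS, map_sum]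
    refine Finset.sum_congr rfl fun n _ => ?_
    rw [← smul_eq_C_mul, Derivation.map_smul]
  have hterm : coeff r (d⁄dX A S * G ^ (r + 1)) =
      ∑ n ∈ Finset.range (r + 2),
        (coeff n h) * coeff r (d⁄dX A ((X * g) ^ n) * G ^ (r + 1)) := by
    rw [hDS, Finset.sum_mul, map_sum]
    refine Finset.sum_congr rfl fun n _ => ?_
    rw [smul_mul_assoc, map_smul, smul_eq_mul]
  have hzero : ∀ n ∈ Finset.range (r + 1),
      (coeff n h) * coeff r (d⁄dX A ((X * g) ^ n) * G ^ (r + 1)) = 0 := by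
    intro n hn
    rw [Finset.mem_range] at hn
    rcases Nat.eq_zero_or_pos n with h0 | hpos
    · subst h0; simp
    · obtain ⟨m, rfl⟩ := Nat.exists_eq_succ_of_ne_zero (Nat.pos_iff_ne_zero.mp hpos)
      rw [Derivation.leibniz_pow]
      simp only [Nat.succ_sub_one, Nat.add_sub_cancel, smul_eq_mul]
      rw [smul_mul_assoc, map_nsmul]
      have hk := key_vanish g G hG m (r - 1 - m)
      rw [show m + (r - 1 - m) + 1 = r by omega, show m + (r - 1 - m) + 2 = r + 1 by omega] at hk
      rw [hk, smul_zero, mul_zero]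
  have hG0 : constantCoeff G = 1 := by
    have hcc := congrArg (constantCoeff) hG
    rw [map_mul, hg, one_mul, map_one] at hcc
    exact hcc
  have hD0 : coeff 0 (d⁄dX A (X * g)) = 1 := by
    rw [coeff_derivative, coeff_succ_X_mul, coeff_zero_eq_constantCoeff_apply, hg]
    push_cast
    ring
  have hlast : coeff r (d⁄dX A ((X * g) ^ (r + 1)) * G ^ (r + 1)) = ((r + 1 : ℕ) : A) := by
    rw [Derivation.leibniz_pow]
    simp only [Nat.add_sub_cancel, smul_eq_mul]
    rw [smul_mul_assoc, map_nsmul, nsmul_eq_mul]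
    have e : (X * g) ^ r * (d⁄dX A (X * g)) * G ^ (r + 1) =
        X ^ r * (g ^ r * (d⁄dX A (X * g)) * G ^ (r + 1)) := by ring
    rw [e, coeff_X_pow_mul', if_pos (le_refl r), Nat.sub_self,
      coeff_zero_eq_constantCoeff_apply, map_mul, map_mul, map_pow, map_pow, hg, hG0,
      ← coeff_zero_eq_constantCoeff_apply, hD0]
    ring
  rw [← step5, hterm, Finset.sum_range_succ, Finset.sum_eq_zero hzero, zero_add, hlast]
  push_cast
  ring
end
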